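/- arXiv:1405.1223 — 4 statements merged into one kernel-verified Lean document; each statement's English description precedes it below -/
import Mathlib

section
/- Let C be a convex body in the plane containing the rectangle R = [−a,a] × [−b,b], with diameter at most d, and let K be an ε-kernel of C with a, b ≥ dε. Then K contains the axis-parallel rectangle S = [−a+dε, a−dε] × [−b+dε, b−dε]. -/
open scoped RealInnerProductSpace
noncomputable section

abbrev V : Type := EuclideanSpace ℝ (Fin 2)

/-- Directional width of a set in direction `u`. -/
def width (u : V) (C : Set V) : ℝ :=
  sSup ((fun p => ⟪p, u⟫) '' C) - sInf ((fun p => ⟪p, u⟫) '' C)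

/-- A convex body in the plane. -/
def IsConvexBody (C : Set V) : Prop :=
  IsCompact C ∧ Convex ℝ C ∧ (interior C).Nonempty

/-- `K` is an `ε`-kernel of `C`. -/
def IsKernel (ε : ℝ) (K C : Set V) : Prop :=
  K ⊆ C ∧ IsCompact K ∧ Convex ℝ K ∧
    ∀ u : V, ‖u‖ = 1 → (1 - ε) * width u C ≤ width u K

/-- The parallelogram with vertices `x, x+u, x+v, x+u+v`. -/
def Q (x u v : V) : Set V := convexHull ℝ {x, x + u, x + v, x + u + v}

/-- The axis-parallel rectangle `[-a,a] × [-b,b]`. -/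
def rect (a b : ℝ) : Set V := {p | |p 0| ≤ a ∧ |p 1| ≤ b}

lemma inner_two (x y : V) : ⟪x, y⟫ = x 0 * y 0 + x 1 * y 1 := by
  simp [PiLp.inner_apply, Fin.sum_univ_two, RCLike.inner_apply, conj_trivial]; ring

set_option maxHeartbeats 1000000 in
/-- a kernel of a body containing a rectangle contains a slightly
shrunk rectangle. -/
theorem kernel_contains_shrunk_rectangle
    (C K : Set V) (hC : IsConvexBody C) (a b d ε : ℝ)
    (hR : rect a b ⊆ C) (hd : Metric.diam C ≤ d)
    (hε : ε ∈ Set.Ioo (0:ℝ) 1) (hK : IsKernel ε K C)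
    (ha : d * ε ≤ a) (hb : d * ε ≤ b) :
    rect (a - d * ε) (b - d * ε) ⊆ K := by
  obtain ⟨hCcomp, hCconv, hCint⟩ := hC
  obtain ⟨hKC, hKcomp, hKconv, hKw⟩ := hK
  obtain ⟨hε0, hε1⟩ := hε
  have hd0 : 0 ≤ d := le_trans Metric.diam_nonneg hd
  have hdε : 0 ≤ d * ε := mul_nonneg hd0 hε0.le
  -- width of C is positive in any unit direction
  have hWpos : ∀ u : V, ‖u‖ = 1 → 0 < width u C := by
    intro u hu
    obtain ⟨x, hx⟩ := hCint
    obtain ⟨r, hr0, hball⟩ := Metric.isOpen_iff.mp isOpen_interior x hx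
    have hball' : Metric.ball x r ⊆ C := hball.trans interior_subset
    have huu : ⟪u, u⟫ = 1 := by rw [real_inner_self_eq_norm_sq, hu]; norm_num
    have hmem : ∀ t : ℝ, |t| < r → x + t • u ∈ C := by
      intro t ht
      apply hball'
      simp only [Metric.mem_ball, dist_eq_norm, add_sub_cancel_left, norm_smul, hu,
        Real.norm_eq_abs, mul_one]
      exact ht
    have h1 : x + (r/2) • u ∈ C := hmem _ (by rw [abs_of_pos (by linarith)]; linarith)
    have h2 : x + (-(r/2)) • u ∈ C := hmem _ (by rw [abs_of_neg (by linarith)]; linarith)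
    have hcont : Continuous (fun p : V => ⟪p, u⟫) :=
      Continuous.inner continuous_id continuous_const
    have hbddA : BddAbove ((fun p : V => ⟪p, u⟫) '' C) :=
      (hCcomp.image hcont).bddAbove
    have hbddB : BddBelow ((fun p : V => ⟪p, u⟫) '' C) :=
      (hCcomp.image hcont).bddBelow
    have hle1 : ⟪x + (r/2) • u, u⟫ ≤ sSup ((fun p : V => ⟪p, u⟫) '' C) :=
      le_csSup hbddA ⟨_, h1, rfl⟩
    have hle2 : sInf ((fun p : V => ⟪p, u⟫) '' C) ≤ ⟪x + (-(r/2)) • u, u⟫ :=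
      csInf_le hbddB ⟨_, h2, rfl⟩
    have e1 : ⟪x + (r/2) • u, u⟫ = ⟪x, u⟫ + r/2 := by
      rw [inner_add_left, real_inner_smul_left, huu]; ring
    have e2 : ⟪x + (-(r/2)) • u, u⟫ = ⟪x, u⟫ - r/2 := by
      rw [inner_add_left, real_inner_smul_left, huu]; ring
    rw [e1] at hle1; rw [e2] at hle2
    unfold width
    linarith
  -- K is nonempty
  have hKne : K.Nonempty := by
    by_contra h
    rw [Set.not_nonempty_iff_eq_empty] at h
    have hu0 : ‖(EuclideanSpace.single (0 : Fin 2) (1:ℝ) : V)‖ = 1 := by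
      rw [EuclideanSpace.norm_single]; norm_num
    have := hKw _ hu0
    have hW := hWpos _ hu0
    rw [h] at this
    simp only [width, Set.image_empty, Real.sSup_empty, Real.sInf_empty, sub_zero] at this
    simp only [width] at hW
    nlinarith
  -- main argument
  intro p hp
  obtain ⟨hp0, hp1⟩ := hp
  have hpC : p ∈ C := hR ⟨by rw [abs_le] at hp0 ⊢; constructor <;> linarith [abs_nonneg (p 0)],
    by rw [abs_le] at hp1 ⊢; constructor <;> linarith⟩
  by_contra hpK
  obtain ⟨f, t, hft, htp⟩ :=
    geometric_hahn_banach_closed_point hKconv hKcomp.isClosed hpK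
  set v : V := (InnerProductSpace.toDual ℝ V).symm f with hv
  have hfv : ∀ x : V, ⟪v, x⟫ = f x := fun x => InnerProductSpace.toDual_symm_apply
  have hvne : v ≠ 0 := by
    intro h0
    obtain ⟨k₁, hk₁⟩ := hKne
    have h1 := hfv k₁
    have h2 := hfv p
    rw [h0] at h1 h2
    simp only [inner_zero_left] at h1 h2
    have := hft k₁ hk₁
    linarith
  have hvpos : 0 < ‖v‖ := norm_pos_iff.mpr hvne
  set u : V := ‖v‖⁻¹ • v with huv
  have hu : ‖u‖ = 1 := by
    rw [huv, norm_smul, norm_inv, norm_norm, inv_mul_cancel₀ hvpos.ne']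
  set g : V → ℝ := fun x => ⟪x, u⟫ with hg
  have hgeq : ∀ x : V, g x = ‖v‖⁻¹ * f x := by
    intro x
    rw [hg]
    simp only [huv, real_inner_smul_right]
    rw [← hfv x, real_inner_comm]
  have hglt : ∀ k ∈ K, g k < g p := by
    intro k hk
    rw [hgeq, hgeq]
    exact mul_lt_mul_of_pos_left (lt_trans (hft k hk) htp) (inv_pos.mpr hvpos)
  have hcont : Continuous g := Continuous.inner continuous_id continuous_const
  -- sup over K is attained
  obtain ⟨k₀, hk₀K, hk₀max⟩ := hKcomp.exists_isMaxOn hKne hcont.continuousOn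
  have hsupK : sSup (g '' K) = g k₀ :=
    IsGreatest.csSup_eq ⟨⟨k₀, hk₀K, rfl⟩, by rintro y ⟨k, hk, rfl⟩; exact hk₀max hk⟩
  have hCne : C.Nonempty := ⟨p, hpC⟩
  have hbddAC : BddAbove (g '' C) := (hCcomp.image hcont).bddAbove
  have hbddBC : BddBelow (g '' C) := (hCcomp.image hcont).bddBelow
  -- width of C bounded by d
  obtain ⟨xC, hxC, hxCmax⟩ := hCcomp.exists_isMaxOn hCne hcont.continuousOn
  obtain ⟨yC, hyC, hyCmin⟩ := hCcomp.exists_isMinOn hCne hcont.continuousOn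
  have hsupC : sSup (g '' C) = g xC :=
    IsGreatest.csSup_eq ⟨⟨xC, hxC, rfl⟩, by rintro y ⟨c, hc, rfl⟩; exact hxCmax hc⟩
  have hinfC : sInf (g '' C) = g yC :=
    IsLeast.csInf_eq ⟨⟨yC, hyC, rfl⟩, by rintro y ⟨c, hc, rfl⟩; exact hyCmin hc⟩
  have hWd : sSup (g '' C) - sInf (g '' C) ≤ d := by
    rw [hsupC, hinfC]
    have : g xC - g yC = ⟪xC - yC, u⟫ := by rw [hg]; simp [inner_sub_left]
    rw [this]
    calc ⟪xC - yC, u⟫ ≤ ‖xC - yC‖ * ‖u‖ := real_inner_le_norm _ _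
      _ = dist xC yC := by rw [hu, mul_one, dist_eq_norm]
      _ ≤ Metric.diam C := Metric.dist_le_diam_of_mem hCcomp.isBounded hxC hyC
      _ ≤ d := hd
  -- construct c ∈ C with g c ≥ g p + d*ε
  set s0 : ℝ := if 0 ≤ u 0 then 1 else -1 with hs0
  set s1 : ℝ := if 0 ≤ u 1 then 1 else -1 with hs1
  set c : V := p + (d*ε*s0) • EuclideanSpace.single 0 1
      + (d*ε*s1) • EuclideanSpace.single 1 1 with hcdef
  have hc0 : c 0 = p 0 + d*ε*s0 := by
    simp [hcdef, EuclideanSpace.single_apply]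
  have hc1 : c 1 = p 1 + d*ε*s1 := by
    simp [hcdef, EuclideanSpace.single_apply]
  have habs0 : |s0| = 1 := by rw [hs0]; split_ifs <;> norm_num
  have habs1 : |s1| = 1 := by rw [hs1]; split_ifs <;> norm_num
  have hcC : c ∈ C := by
    apply hR
    constructor
    · rw [hc0]
      calc |p 0 + d*ε*s0| ≤ |p 0| + |d*ε*s0| := abs_add_le _ _
        _ = |p 0| + d*ε := by rw [abs_mul, habs0, abs_of_nonneg hdε, mul_one]
        _ ≤ a := by linarith
    · rw [hc1]
      calc |p 1 + d*ε*s1| ≤ |p 1| + |d*ε*s1| := abs_add_le _ _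
        _ = |p 1| + d*ε := by rw [abs_mul, habs1, abs_of_nonneg hdε, mul_one]
        _ ≤ b := by linarith
  have hs0u : s0 * u 0 = |u 0| := by
    rw [hs0]; split_ifs with h
    · rw [one_mul, abs_of_nonneg h]
    · rw [abs_of_neg (not_le.mp h)]; ring
  have hs1u : s1 * u 1 = |u 1| := by
    rw [hs1]; split_ifs with h
    · rw [one_mul, abs_of_nonneg h]
    · rw [abs_of_neg (not_le.mp h)]; ring
  have habsu : 1 ≤ |u 0| + |u 1| := by
    have h1 : u 0 * u 0 + u 1 * u 1 = 1 := by
      rw [← inner_two, real_inner_self_eq_norm_sq, hu]; norm_num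
    nlinarith [abs_nonneg (u 0), abs_nonneg (u 1), sq_abs (u 0), sq_abs (u 1),
      mul_nonneg (abs_nonneg (u 0)) (abs_nonneg (u 1))]
  have hgc : g p + d*ε ≤ g c := by
    have heq : g c = g p + d*ε*(s0 * u 0) + d*ε*(s1 * u 1) := by
      simp only [hg]
      rw [inner_two, inner_two, hc0, hc1]; ring
    rw [heq, hs0u, hs1u]
    nlinarith
  -- assemble
  have hgcA : g c ≤ sSup (g '' C) := le_csSup hbddAC ⟨c, hcC, rfl⟩
  have hmK : sInf (g '' C) ≤ sInf (g '' K) :=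
    csInf_le_csInf hbddBC (hKne.image g) (Set.image_mono hKC)
  have hwidth := hKw u hu
  have hwK : width u K = sSup (g '' K) - sInf (g '' K) := rfl
  have hwC : width u C = sSup (g '' C) - sInf (g '' C) := rfl
  have hεW : ε * (sSup (g '' C) - sInf (g '' C)) ≤ ε * d :=
    mul_le_mul_of_nonneg_left hWd hε0.le
  have hexp : (1 - ε) * (sSup (g '' C) - sInf (g '' C))
      = (sSup (g '' C) - sInf (g '' C)) - ε * (sSup (g '' C) - sInf (g '' C)) := by ring
  have hk₀lt : g k₀ < g p := hglt k₀ hk₀K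
  rw [hwK, hwC, hexp, hsupK] at hwidth
  nlinarith
end
end

section
/- Let C be a convex body in the plane, let R_opt be a maximum-area rectangle contained in C, and let φ be an invertible affine transformation mapping R_opt onto the square [−1,1]². Then φ(C) is contained in the closed disk of radius 8 centered at the origin, and in particular the diameter of φ(C) is at most 16. -/
open scoped RealInnerProductSpace Pointwise ENNReal
open MeasureTheory
noncomputable section

/-! ### Auxiliary material -/

/-- A planar point from coordinates. -/
def pt (a b : ℝ) : V := WithLp.toLp 2 ![a, b]

@[simp] lemma pt0 (a b : ℝ) : pt a b 0 = a := rfl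
@[simp] lemma pt1 (a b : ℝ) : pt a b 1 = b := rfl

/-- 2×2 determinant of two planar vectors. -/
def detV (w1 w2 : V) : ℝ := w1 0 * w2 1 - w1 1 * w2 0

lemma decompV (w : V) :
    w = w 0 • EuclideanSpace.single 0 (1:ℝ) + w 1 • EuclideanSpace.single 1 1 := by
  ext i; fin_cases i <;> simp [EuclideanSpace.single_apply]

lemma detL (L : V →ₗ[ℝ] V) :
    LinearMap.det L = detV (L (EuclideanSpace.single 0 1)) (L (EuclideanSpace.single 1 1)) := by
  rw [← LinearMap.det_toMatrix (EuclideanSpace.basisFun (Fin 2) ℝ).toBasis, Matrix.det_fin_two]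
  simp [LinearMap.toMatrix_apply, detV]
  ring

lemma detV_map (L : V →ₗ[ℝ] V) (w1 w2 : V) :
    detV (L w1) (L w2) = LinearMap.det L * detV w1 w2 := by
  have h1 : L w1 = w1 0 • L (EuclideanSpace.single 0 1) + w1 1 • L (EuclideanSpace.single 1 1) := by
    conv_lhs => rw [decompV w1]
    simp
  have h2 : L w2 = w2 0 • L (EuclideanSpace.single 0 1) + w2 1 • L (EuclideanSpace.single 1 1) := by
    conv_lhs => rw [decompV w2]
    simp
  rw [detL L]
  simp only [detV, h1, h2, PiLp.add_apply, PiLp.smul_apply, smul_eq_mul]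
  ring

/-- Membership of the square in hull form. -/
lemma rect_eq_hull : rect 1 1 =
    convexHull ℝ {pt (-1) (-1), pt 1 (-1), pt (-1) 1, pt 1 1} := by
  apply le_antisymm
  · -- rect ⊆ hull
    intro p hp
    obtain ⟨ha, hb⟩ := hp
    rw [abs_le] at ha hb
    have hull := convex_convexHull ℝ ({pt (-1) (-1), pt 1 (-1), pt (-1) 1, pt 1 1} : Set V)
    have m1 : pt (-1) (-1) ∈ convexHull ℝ ({pt (-1) (-1), pt 1 (-1), pt (-1) 1, pt 1 1} : Set V) :=
      subset_convexHull ℝ _ (by simp)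
    have m2 : pt 1 (-1) ∈ convexHull ℝ ({pt (-1) (-1), pt 1 (-1), pt (-1) 1, pt 1 1} : Set V) :=
      subset_convexHull ℝ _ (by simp)
    have m3 : pt (-1) 1 ∈ convexHull ℝ ({pt (-1) (-1), pt 1 (-1), pt (-1) 1, pt 1 1} : Set V) :=
      subset_convexHull ℝ _ (by simp)
    have m4 : pt 1 1 ∈ convexHull ℝ ({pt (-1) (-1), pt 1 (-1), pt (-1) 1, pt 1 1} : Set V) :=
      subset_convexHull ℝ _ (by simp)
    have q1 : pt (p 0) (-1) ∈ convexHull ℝ ({pt (-1) (-1), pt 1 (-1), pt (-1) 1, pt 1 1} : Set V) := by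
      refine hull.segment_subset m1 m2 ⟨(1 - p 0)/2, (1 + p 0)/2, by linarith, by linarith,
        by ring, ?_⟩
      ext i; fin_cases i <;> simp <;> ring
    have q2 : pt (p 0) 1 ∈ convexHull ℝ ({pt (-1) (-1), pt 1 (-1), pt (-1) 1, pt 1 1} : Set V) := by
      refine hull.segment_subset m3 m4 ⟨(1 - p 0)/2, (1 + p 0)/2, by linarith, by linarith,
        by ring, ?_⟩
      ext i; fin_cases i <;> simp <;> ring
    refine hull.segment_subset q1 q2 ⟨(1 - p 1)/2, (1 + p 1)/2, by linarith, by linarith,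
      by ring, ?_⟩
    ext i; fin_cases i <;> simp <;> ring
  · -- hull ⊆ rect
    apply convexHull_min
    · intro z hz
      simp only [Set.mem_insert_iff, Set.mem_singleton_iff] at hz
      rcases hz with rfl | rfl | rfl | rfl <;>
        constructor <;> simp [rect] <;> norm_num
    · intro z hz w hw a b ha hb hab
      have hz0 := hz.1; have hz1 := hz.2; have hw0 := hw.1; have hw1 := hw.2
      constructor
      · have : (a • z + b • w) 0 = a * z 0 + b * w 0 := by
          simp [PiLp.add_apply, PiLp.smul_apply]
        rw [this]
        calc |a * z 0 + b * w 0| ≤ |a * z 0| + |b * w 0| := abs_add_le _ _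
          _ = a * |z 0| + b * |w 0| := by rw [abs_mul, abs_mul, abs_of_nonneg ha, abs_of_nonneg hb]
          _ ≤ a * 1 + b * 1 := by
              gcongr
          _ = 1 := by linarith
      · have : (a • z + b • w) 1 = a * z 1 + b * w 1 := by
          simp [PiLp.add_apply, PiLp.smul_apply]
        rw [this]
        calc |a * z 1 + b * w 1| ≤ |a * z 1| + |b * w 1| := abs_add_le _ _
          _ = a * |z 1| + b * |w 1| := by rw [abs_mul, abs_mul, abs_of_nonneg ha, abs_of_nonneg hb]
          _ ≤ a * 1 + b * 1 := by gcongr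
          _ = 1 := by linarith

/-- The linear part of the canonical affine parametrization of a parallelogram. -/
def Lmap (u' v' : V) : V →ₗ[ℝ] V where
  toFun z := (z 0 / 2) • u' + (z 1 / 2) • v'
  map_add' z w := by
    simp only [PiLp.add_apply]
    rw [add_div, add_div, add_smul, add_smul]
    abel
  map_smul' c z := by
    simp only [PiLp.smul_apply, smul_eq_mul, RingHom.id_apply]
    rw [mul_div_assoc, mul_div_assoc, ← smul_smul, ← smul_smul, smul_add]

/-- The canonical affine parametrization of a parallelogram by the square. -/
def psi (x' u' v' : V) : V →ᵃ[ℝ] V where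
  toFun z := x' + ((1:ℝ)/2) • u' + ((1:ℝ)/2) • v' + Lmap u' v' z
  linear := Lmap u' v'
  map_vadd' p z := by
    simp only [vadd_eq_add, map_add]
    abel

lemma det_Lmap (u' v' : V) : LinearMap.det (Lmap u' v') = detV u' v' / 4 := by
  rw [detL]
  have e1 : Lmap u' v' (EuclideanSpace.single 0 1) = ((1:ℝ)/2) • u' := by
    simp [Lmap, EuclideanSpace.single_apply]
  have e2 : Lmap u' v' (EuclideanSpace.single 1 1) = ((1:ℝ)/2) • v' := by
    simp [Lmap, EuclideanSpace.single_apply]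
  rw [e1, e2]
  simp only [detV, PiLp.smul_apply, smul_eq_mul]
  ring

lemma psi_image (x' u' v' : V) : psi x' u' v' '' rect 1 1 = Q x' u' v' := by
  rw [rect_eq_hull, AffineMap.image_convexHull, Q]
  congr 1
  have c1 : psi x' u' v' (pt (-1) (-1)) = x' := by
    simp only [psi, Lmap, AffineMap.coe_mk, LinearMap.coe_mk, AddHom.coe_mk, pt0, pt1]
    module
  have c2 : psi x' u' v' (pt 1 (-1)) = x' + u' := by
    simp only [psi, Lmap, AffineMap.coe_mk, LinearMap.coe_mk, AddHom.coe_mk, pt0, pt1]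
    module
  have c3 : psi x' u' v' (pt (-1) 1) = x' + v' := by
    simp only [psi, Lmap, AffineMap.coe_mk, LinearMap.coe_mk, AddHom.coe_mk, pt0, pt1]
    module
  have c4 : psi x' u' v' (pt 1 1) = x' + u' + v' := by
    simp only [psi, Lmap, AffineMap.coe_mk, LinearMap.coe_mk, AddHom.coe_mk, pt0, pt1]
    module
  simp only [Set.image_insert_eq, Set.image_singleton, c1, c2, c3, c4]

/-- Volume scaling under an affine self-map of the plane. -/
lemma vol_affine_image (f : V →ᵃ[ℝ] V) (s : Set V) :
    volume (f '' s) = ENNReal.ofReal |LinearMap.det f.linear| * volume s := by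
  have h : f '' s = f 0 +ᵥ (f.linear '' s) := by
    rw [← Set.image_vadd, Set.image_image]
    apply Set.image_congr'
    intro z
    have := f.map_vadd 0 z
    simp only [vadd_eq_add, add_zero] at this ⊢
    rw [this, add_comm]
  rw [h, measure_vadd (μ := (volume : Measure V)), Measure.addHaar_image_linearMap]

lemma vol_Q (x' u' v' : V) :
    volume (Q x' u' v') = ENNReal.ofReal (|detV u' v'| / 4) * volume (rect 1 1) := by
  rw [← psi_image, vol_affine_image]
  congr 2
  show |LinearMap.det (Lmap u' v')| = |detV u' v'| / 4
  rw [det_Lmap, abs_div]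
  norm_num

lemma vol_rect_pos : 0 < volume (rect 1 1) := by
  have hsub : Metric.ball (0:V) 1 ⊆ rect 1 1 := by
    intro z hz
    rw [Metric.mem_ball, dist_zero_right] at hz
    have h0 : ∀ i : Fin 2, |z i| ≤ ‖z‖ := by
      intro i
      rw [EuclideanSpace.norm_eq]
      rw [show |z i| = Real.sqrt (|z i|^2) from (Real.sqrt_sq (abs_nonneg _)).symm]
      apply Real.sqrt_le_sqrt
      fin_cases i <;> simp [Fin.sum_univ_two, sq_abs] <;> nlinarith [sq_nonneg (z 0), sq_nonneg (z 1)]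
    exact ⟨(h0 0).trans hz.le, (h0 1).trans hz.le⟩
  calc (0:ℝ≥0∞) < volume (Metric.ball (0:V) 1) := Metric.measure_ball_pos volume _ (by norm_num)
    _ ≤ volume (rect 1 1) := measure_mono hsub

lemma vol_rect_fin : volume (rect 1 1) < ⊤ := by
  have hsub : rect 1 1 ⊆ Metric.closedBall (0:V) 2 := by
    intro z hz
    rw [Metric.mem_closedBall, dist_zero_right, EuclideanSpace.norm_eq]
    rw [show (2:ℝ) = Real.sqrt 4 by rw [show (4:ℝ) = 2^2 by norm_num, Real.sqrt_sq]; norm_num]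
    apply Real.sqrt_le_sqrt
    have h1 := hz.1; have h2 := hz.2
    simp only [Fin.sum_univ_two, Real.norm_eq_abs, sq_abs]
    nlinarith [abs_nonneg (z 0), abs_nonneg (z 1), sq_abs (z 0), sq_abs (z 1)]
  calc volume (rect 1 1) ≤ volume (Metric.closedBall (0:V) 2) := measure_mono hsub
    _ < ⊤ := measure_closedBall_lt_top

/-- The half-area inscribed rectangle of a triangle, base case: `P1P2` is a longest side. -/
lemma tri0 (P1 P2 P3 : V) (h2 : ‖P3 - P1‖ ≤ ‖P2 - P1‖) (h3 : ‖P3 - P2‖ ≤ ‖P2 - P1‖) :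
    ∃ x' u' v' : V, ⟪u', v'⟫ = 0 ∧ Q x' u' v' ⊆ convexHull ℝ {P1, P2, P3} ∧
      |detV u' v'| = |detV (P2 - P1) (P3 - P1)| / 4 := by
  by_cases hd : P2 = P1
  · -- degenerate
    have h31 : P3 = P1 := by
      have : ‖P3 - P1‖ ≤ 0 := by rw [hd, sub_self, norm_zero] at h2; exact h2
      have := norm_nonneg (P3 - P1)
      have : ‖P3 - P1‖ = 0 := le_antisymm ‹_› ‹_›
      rwa [norm_eq_zero, sub_eq_zero] at this
    refine ⟨P1, 0, 0, by simp, ?_, ?_⟩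
    · have : Q P1 0 0 = convexHull ℝ {P1} := by
        unfold Q; congr 1; simp
      rw [this]
      exact convexHull_mono (by simp)
    · rw [hd, h31]
      simp [detV]
  · have hn : (0:ℝ) < ‖P2 - P1‖ := by
      rw [norm_pos_iff]; intro h; exact hd (by rwa [sub_eq_zero] at h)
    set d : V := P2 - P1 with hddef
    set n : ℝ := ‖d‖ with hndef
    set t : ℝ := ⟪P3 - P1, d⟫ / (2 * n ^ 2) with htdef
    have hn2 : n ^ 2 = ⟪d, d⟫ := (real_inner_self_eq_norm_sq d).symm
    -- 0 ≤ t
    have hip : ‖P3 - P1‖ ^ 2 / 2 ≤ ⟪P3 - P1, d⟫ := by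
      have hexp : ‖P3 - P2‖ ^ 2 = ‖P3 - P1‖ ^ 2 - 2 * ⟪P3 - P1, d⟫ + n ^ 2 := by
        have : P3 - P2 = (P3 - P1) - d := by rw [hddef]; abel
        rw [this, norm_sub_sq_real]
      have hsq : ‖P3 - P2‖ ^ 2 ≤ n ^ 2 := by
        have := h3
        nlinarith [norm_nonneg (P3 - P2), norm_nonneg d]
      nlinarith
    have ht0 : 0 ≤ t := by
      apply div_nonneg _ (by positivity)
      nlinarith [sq_nonneg ‖P3 - P1‖]
    have ht12 : t ≤ 1 / 2 := by
      rw [htdef, div_le_iff₀ (by positivity)]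
      have hcs : ⟪P3 - P1, d⟫ ≤ ‖P3 - P1‖ * n := real_inner_le_norm _ _
      nlinarith [norm_nonneg (P3 - P1)]
    refine ⟨P1 + t • d, (1/2 : ℝ) • d, ((1/2 : ℝ) • (P3 - P1)) - t • d, ?_, ?_, ?_⟩
    · -- orthogonality
      rw [inner_sub_right, real_inner_smul_left, real_inner_smul_left, real_inner_smul_right,
        real_inner_smul_right, ← hn2, htdef]
      rw [real_inner_comm d (P3 - P1)]
      field_simp
      ring
    · -- containment
      have hmem : ∀ z ∈ ({P1 + t • d, P1 + t • d + (1/2 : ℝ) • d,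
          P1 + t • d + (((1/2 : ℝ) • (P3 - P1)) - t • d),
          P1 + t • d + (1/2 : ℝ) • d + (((1/2 : ℝ) • (P3 - P1)) - t • d)} : Set V),
          z ∈ convexHull ℝ ({P1, P2, P3} : Set V) := by
        have hull := convex_convexHull ℝ ({P1, P2, P3} : Set V)
        have mP1 : P1 ∈ convexHull ℝ ({P1, P2, P3} : Set V) := subset_convexHull ℝ _ (by simp)
        have mP2 : P2 ∈ convexHull ℝ ({P1, P2, P3} : Set V) := subset_convexHull ℝ _ (by simp)
        have mP3 : P3 ∈ convexHull ℝ ({P1, P2, P3} : Set V) := subset_convexHull ℝ _ (by simp)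
        intro z hz
        simp only [Set.mem_insert_iff, Set.mem_singleton_iff] at hz
        rcases hz with rfl | rfl | rfl | rfl
        · exact hull.segment_subset mP1 mP2 ⟨1 - t, t, by linarith, ht0, by ring, by
            rw [hddef]; module⟩
        · exact hull.segment_subset mP1 mP2 ⟨1 - (t + 1/2), t + 1/2, by linarith, by linarith,
            by ring, by rw [hddef]; module⟩
        · exact hull.segment_subset mP1 mP3 ⟨1/2, 1/2, by norm_num, by norm_num, by ring, by
            module⟩
        · exact hull.segment_subset mP2 mP3 ⟨1/2, 1/2, by norm_num, by norm_num, by ring, by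
            rw [hddef]; module⟩
      unfold Q
      exact convexHull_min hmem (convex_convexHull ℝ _)
    · -- determinant
      have : detV ((1/2 : ℝ) • d) (((1/2 : ℝ) • (P3 - P1)) - t • d) = detV d (P3 - P1) / 4 := by
        simp only [detV, PiLp.smul_apply, PiLp.sub_apply, smul_eq_mul]
        ring
      rw [this, hddef, abs_div]
      norm_num

lemma detV_swap (w1 w2 : V) : detV w1 w2 = - detV w2 w1 := by simp only [detV]; ring

lemma detV_cycle (P1 P2 P3 : V) : detV (P3 - P2) (P1 - P2) = detV (P2 - P1) (P3 - P1) := by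
  simp only [detV, PiLp.sub_apply]; ring

/-- Any triangle contains an inscribed rectangle of half its area. -/
lemma tri (P1 P2 P3 : V) :
    ∃ x' u' v' : V, ⟪u', v'⟫ = 0 ∧ Q x' u' v' ⊆ convexHull ℝ {P1, P2, P3} ∧
      |detV (P2 - P1) (P3 - P1)| ≤ 4 * |detV u' v'| := by
  have hset2 : ({P1, P3, P2} : Set V) = {P1, P2, P3} := by
    ext z; simp only [Set.mem_insert_iff, Set.mem_singleton_iff]; tauto
  have hset3 : ({P2, P3, P1} : Set V) = {P1, P2, P3} := by
    ext z; simp only [Set.mem_insert_iff, Set.mem_singleton_iff]; tauto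
  rcases le_total ‖P2 - P1‖ ‖P3 - P1‖ with h | h
  · rcases le_total ‖P3 - P1‖ ‖P3 - P2‖ with h' | h'
    · -- P2P3 longest
      obtain ⟨x', u', v', ho, hs, hdet⟩ := tri0 P2 P3 P1
        (by rw [show P1 - P2 = -(P2 - P1) by abel, norm_neg]; exact h.trans h')
        (by rw [show P1 - P3 = -(P3 - P1) by abel, norm_neg]; exact h')
      refine ⟨x', u', v', ho, by rwa [hset3] at hs, ?_⟩
      rw [detV_cycle] at hdet
      rw [hdet]; linarith
    · -- P1P3 longest
      obtain ⟨x', u', v', ho, hs, hdet⟩ := tri0 P1 P3 P2 h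
        (by rw [show P2 - P3 = -(P3 - P2) by abel, norm_neg]; exact h')
      refine ⟨x', u', v', ho, by rwa [hset2] at hs, ?_⟩
      rw [detV_swap (P3 - P1) (P2 - P1), abs_neg] at hdet
      rw [hdet]; linarith
  · rcases le_total ‖P2 - P1‖ ‖P3 - P2‖ with h' | h'
    · -- P2P3 longest
      obtain ⟨x', u', v', ho, hs, hdet⟩ := tri0 P2 P3 P1
        (by rw [show P1 - P2 = -(P2 - P1) by abel, norm_neg]; exact h')
        (by rw [show P1 - P3 = -(P3 - P1) by abel, norm_neg]; exact h.trans h')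
      refine ⟨x', u', v', ho, by rwa [hset3] at hs, ?_⟩
      rw [detV_cycle] at hdet
      rw [hdet]; linarith
    · -- P1P2 longest
      obtain ⟨x', u', v', ho, hs, hdet⟩ := tri0 P1 P2 P3 h h'
      refine ⟨x', u', v', ho, hs, ?_⟩
      rw [hdet]; linarith

lemma norm_le_abs_sum (q : V) : ‖q‖ ≤ |q 0| + |q 1| := by
  rw [EuclideanSpace.norm_eq]
  rw [show |q 0| + |q 1| = Real.sqrt ((|q 0| + |q 1|)^2) from
    (Real.sqrt_sq (by positivity)).symm]
  apply Real.sqrt_le_sqrt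
  simp only [Fin.sum_univ_two, Real.norm_eq_abs, sq_abs]
  nlinarith [abs_nonneg (q 0), abs_nonneg (q 1), sq_abs (q 0), sq_abs (q 1)]

lemma abs_add_eq_of_mul_nonneg {a b : ℝ} (h : 0 ≤ a * b) : |a + b| = |a| + |b| := by
  rcases abs_cases a with ⟨e0, s0⟩ | ⟨e0, s0⟩ <;>
    rcases abs_cases b with ⟨e1, s1⟩ | ⟨e1, s1⟩ <;>
    rcases abs_cases (a + b) with ⟨e2, s2⟩ | ⟨e2, s2⟩ <;> nlinarith

lemma abs_sub_eq_of_mul_nonpos {a b : ℝ} (h : a * b ≤ 0) : |a - b| = |a| + |b| := by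
  rcases abs_cases a with ⟨e0, s0⟩ | ⟨e0, s0⟩ <;>
    rcases abs_cases b with ⟨e1, s1⟩ | ⟨e1, s1⟩ <;>
    rcases abs_cases (a - b) with ⟨e2, s2⟩ | ⟨e2, s2⟩ <;> nlinarith

/-- after an affine map sending a maximum-area inscribed rectangle to
`[-1,1]²`, the body lies in the disk of radius 8 and has diameter at most 16. -/
theorem image_of_body_in_disk (C : Set V) (hC : IsConvexBody C)
    (x u v : V) (huv : ⟪u, v⟫ = 0) (hRC : Q x u v ⊆ C)
    (hopt : ∀ x' u' v' : V, ⟪u', v'⟫ = 0 → Q x' u' v' ⊆ C →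
      MeasureTheory.volume (Q x' u' v') ≤ MeasureTheory.volume (Q x u v))
    (φ : V ≃ᵃ[ℝ] V) (hφ : φ '' Q x u v = rect 1 1) :
    φ '' C ⊆ Metric.closedBall (0 : V) 8 ∧ Metric.diam (φ '' C) ≤ 16 := by
  have key : φ '' C ⊆ Metric.closedBall (0 : V) 8 := by
    rintro y ⟨p, hpC, rfl⟩
    rw [Metric.mem_closedBall, dist_zero_right]
    by_contra h8
    push_neg at h8
    set q : V := φ p with hqdef
    -- B is the inverse map
    set B : V ≃ᵃ[ℝ] V := φ.symm with hBdef
    have hBq : B q = p := by rw [hqdef, hBdef]; exact φ.symm_apply_apply p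
    -- volume of Q x u v
    have hQB : Q x u v = ⇑B '' rect 1 1 := by
      rw [← hφ, Set.image_image]
      rw [show (fun z => B (φ z)) = id from funext fun z => φ.symm_apply_apply z]
      rw [Set.image_id]
    set mB : ℝ := LinearMap.det (B.linear.toLinearMap) with hmBdef
    have hmB0 : mB ≠ 0 := IsUnit.ne_zero B.linear.isUnit_det'
    have hmBpos : 0 < |mB| := abs_pos.mpr hmB0
    have hvolQ : volume (Q x u v) = ENNReal.ofReal |mB| * volume (rect 1 1) := by
      rw [hQB, show ⇑B '' rect 1 1 = ⇑B.toAffineMap '' rect 1 1 by rfl, vol_affine_image]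
      rfl
    -- choose the diagonal
    obtain ⟨D1, D2, hD1, hD2, hdiag⟩ : ∃ D1 D2 : V, D1 ∈ rect 1 1 ∧ D2 ∈ rect 1 1 ∧
        |detV (D2 - D1) (q - D1)| = 2 * (|q 0| + |q 1|) := by
      rcases le_or_gt 0 (q 0 * q 1) with hs | hs
      · refine ⟨pt 1 (-1), pt (-1) 1, ⟨by simp, by simp⟩, ⟨by simp, by simp⟩, ?_⟩
        have hd : detV (pt (-1) 1 - pt 1 (-1)) (q - pt 1 (-1)) = -2 * (q 0 + q 1) := by
          simp only [detV, PiLp.sub_apply, pt0, pt1]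
          ring
        rw [hd, abs_mul]
        rw [show |(-2 : ℝ)| = 2 by norm_num]
        rw [abs_add_eq_of_mul_nonneg hs]
      · refine ⟨pt 1 1, pt (-1) (-1), ⟨by simp, by simp⟩, ⟨by simp, by simp⟩, ?_⟩
        have hd : detV (pt (-1) (-1) - pt 1 1) (q - pt 1 1) = 2 * (q 0 - q 1) := by
          simp only [detV, PiLp.sub_apply, pt0, pt1]
          ring
        rw [hd, abs_mul]
        rw [show |(2 : ℝ)| = 2 by norm_num]
        rw [abs_sub_eq_of_mul_nonpos hs.le]
    -- the triangle vertices
    set P1 : V := B D1 with hP1def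
    set P2 : V := B D2 with hP2def
    have hP1C : P1 ∈ C := by
      have : D1 ∈ φ '' Q x u v := by rw [hφ]; exact hD1
      obtain ⟨z, hz, hz2⟩ := this
      have : P1 = z := by rw [hP1def, ← hz2, hBdef]; exact φ.symm_apply_apply z
      rw [this]; exact hRC hz
    have hP2C : P2 ∈ C := by
      have : D2 ∈ φ '' Q x u v := by rw [hφ]; exact hD2
      obtain ⟨z, hz, hz2⟩ := this
      have : P2 = z := by rw [hP2def, ← hz2, hBdef]; exact φ.symm_apply_apply z
      rw [this]; exact hRC hz
    have hsub : ({P1, P2, p} : Set V) ⊆ C := by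
      intro z hz
      simp only [Set.mem_insert_iff, Set.mem_singleton_iff] at hz
      rcases hz with rfl | rfl | rfl
      exacts [hP1C, hP2C, hpC]
    -- the big determinant
    have hPdet : |detV (P2 - P1) (p - P1)| = |mB| * (2 * (|q 0| + |q 1|)) := by
      have e1 : P2 - P1 = B.linear.toLinearMap (D2 - D1) := by
        rw [hP1def, hP2def]
        exact (B.toAffineMap.linearMap_vsub D2 D1).symm
      have e2 : p - P1 = B.linear.toLinearMap (q - D1) := by
        rw [hP1def, ← hBq]
        exact (B.toAffineMap.linearMap_vsub q D1).symm
      rw [e1, e2, detV_map, abs_mul, ← hmBdef, hdiag]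
    -- apply the triangle lemma
    obtain ⟨x', u', v', ho, hQsub, hdet4⟩ := tri P1 P2 p
    have hQC : Q x' u' v' ⊆ C := hQsub.trans (convexHull_min hsub hC.2.1)
    have hle := hopt x' u' v' ho hQC
    rw [vol_Q, hvolQ] at hle
    have hcancel : |detV u' v'| / 4 ≤ |mB| := by
      have h1 : ENNReal.ofReal (|detV u' v'| / 4) ≤ ENNReal.ofReal |mB| := by
        exact (ENNReal.mul_le_mul_iff_left (ne_of_gt vol_rect_pos) (ne_of_lt vol_rect_fin)).mp hle
      rwa [ENNReal.ofReal_le_ofReal_iff (abs_nonneg _)] at h1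
    -- final contradiction
    have hq16 : 16 < 2 * (|q 0| + |q 1|) := by
      have := norm_le_abs_sum q
      linarith
    have hfin : |mB| * (2 * (|q 0| + |q 1|)) ≤ 4 * |detV u' v'| := by
      rw [← hPdet]; exact hdet4
    have h2 : |mB| * 16 < |mB| * (2 * (|q 0| + |q 1|)) :=
      mul_lt_mul_of_pos_left hq16 hmBpos
    linarith
  refine ⟨key, ?_⟩
  calc Metric.diam (φ '' C) ≤ Metric.diam (Metric.closedBall (0:V) 8) :=
        Metric.diam_mono key Metric.isBounded_closedBall
    _ ≤ 2 * 8 := Metric.diam_closedBall (by norm_num)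
    _ ≤ 16 := by norm_num
end
end

section
/- Let C be a convex body in the plane, R_opt a maximum-area rectangle contained in C, and K an ε-kernel of C with ε ∈ (0, 1/32). Then K contains a rectangle of area at least (1−32ε)·area(R_opt); specifically, the rectangle obtained by scaling R_opt by factor 1−16ε about its center is contained in K. -/
open scoped RealInnerProductSpace
noncomputable section

open MeasureTheory Pointwise

theorem mem_Q (x u v : V) (p : V) : p ∈ Q x u v ↔ ∃ s t : ℝ, s ∈ Set.Icc (0:ℝ) 1 ∧ t ∈ Set.Icc (0:ℝ) 1 ∧ p = x + s • u + t • v := by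
  constructor
  · intro hp
    have : Q x u v ⊆ {p : V | ∃ s t : ℝ, s ∈ Set.Icc (0:ℝ) 1 ∧ t ∈ Set.Icc (0:ℝ) 1 ∧ p = x + s • u + t • v} := by
      apply convexHull_min
      · rintro q hq
        simp only [Set.mem_insert_iff, Set.mem_singleton_iff] at hq
        rcases hq with rfl | rfl | rfl | rfl
        · exact ⟨0, 0, by norm_num, by norm_num, by simp⟩
        · exact ⟨1, 0, by norm_num, by norm_num, by simp⟩
        · exact ⟨0, 1, by norm_num, by norm_num, by simp⟩
        · exact ⟨1, 1, by norm_num, by norm_num, by simp [add_assoc]⟩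
      · rintro p ⟨s, t, hs, ht, rfl⟩ q ⟨s', t', hs', ht', rfl⟩ a b ha hb hab
        refine ⟨a*s + b*s', a*t+b*t',
          ⟨add_nonneg (mul_nonneg ha hs.1) (mul_nonneg hb hs'.1), ?_⟩,
          ⟨add_nonneg (mul_nonneg ha ht.1) (mul_nonneg hb ht'.1), ?_⟩, ?_⟩
        · calc a*s+b*s' ≤ a*1+b*1 := by gcongr; exacts [hs.2, hs'.2]
          _ = 1 := by linarith
        · calc a*t+b*t' ≤ a*1+b*1 := by gcongr; exacts [ht.2, ht'.2]
          _ = 1 := by linarith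
        · have hb' : b = 1 - a := by linarith
          subst hb'; module
    exact this hp
  · rintro ⟨s, t, hs, ht, rfl⟩
    have h4 : ∀ z ∈ ({x, x + u, x + v, x + u + v} : Set V), z ∈ Q x u v := fun z hz => subset_convexHull ℝ _ hz
    have hc : Convex ℝ (Q x u v) := convex_convexHull ℝ _
    have h1 : x + s • u ∈ Q x u v := by
      have := hc (h4 x (by simp)) (h4 (x+u) (by simp)) (a := 1 - s) (b := s) (by linarith [hs.2]) hs.1 (by ring)
      convert this using 1; module
    have h2 : x + s • u + v ∈ Q x u v := by
      have := hc (h4 (x+v) (by simp)) (h4 (x+u+v) (by simp)) (a := 1 - s) (b := s) (by linarith [hs.2]) hs.1 (by ring)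
      convert this using 1; module
    have := hc h1 h2 (a := 1 - t) (b := t) (by linarith [ht.2]) ht.1 (by ring)
    convert this using 1; module


theorem inner_coords (z w : V) : ⟪z, w⟫ = z 0 * w 0 + z 1 * w 1 := by
  simp [PiLp.inner_apply, RCLike.inner_apply, Fin.sum_univ_two]; ring

theorem ext2 (z : V) (h0 : z 0 = 0) (h1 : z 1 = 0) : z = 0 := by
  ext i; fin_cases i <;> simpa

/-- decomposition along an orthogonal pair spanning the plane -/
theorem span2 (u v : V) (huv : ⟪u, v⟫ = 0) (hu : u ≠ 0) (hv : v ≠ 0) (z : V) :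
    z = (⟪z,u⟫/‖u‖^2) • u + (⟪z,v⟫/‖v‖^2) • v := by
  set a : ℝ := ⟪z,u⟫/‖u‖^2
  set b : ℝ := ⟪z,v⟫/‖v‖^2
  have hu2 : (0:ℝ) < ‖u‖^2 := by have := norm_pos_iff.mpr hu; positivity
  have hv2 : (0:ℝ) < ‖v‖^2 := by have := norm_pos_iff.mpr hv; positivity
  set n : V := z - a • u - b • v with hn
  have h1 : ⟪n, u⟫ = 0 := by
    rw [hn, inner_sub_left, inner_sub_left, real_inner_smul_left, real_inner_smul_left,
      real_inner_comm u v, huv, real_inner_self_eq_norm_sq]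
    simp only [a]; rw [div_mul_cancel₀ _ hu2.ne']; ring
  have h2 : ⟪n, v⟫ = 0 := by
    rw [hn, inner_sub_left, inner_sub_left, real_inner_smul_left, real_inner_smul_left,
      huv, real_inner_self_eq_norm_sq]
    simp only [b]; rw [div_mul_cancel₀ _ hv2.ne']; ring
  rw [inner_coords] at h1 h2 huv
  have hnu : ‖u‖^2 = u 0^2 + u 1^2 := by
    rw [← real_inner_self_eq_norm_sq, inner_coords]; ring
  have hnv : ‖v‖^2 = v 0^2 + v 1^2 := by
    rw [← real_inner_self_eq_norm_sq, inner_coords]; ring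
  have hdet : (u 0 * v 1 - u 1 * v 0)^2 = ‖u‖^2 * ‖v‖^2 := by
    rw [hnu, hnv]; nlinarith [huv]
  have hd0 : u 0 * v 1 - u 1 * v 0 ≠ 0 := by
    intro h
    rw [h] at hdet
    nlinarith
  have hn0 : n 0 = 0 := by
    have key : n 0 * (u 0 * v 1 - u 1 * v 0) = 0 := by linear_combination v 1 * h1 - u 1 * h2
    rcases mul_eq_zero.mp key with h | h
    · exact h
    · exact absurd h hd0
  have hn1 : n 1 = 0 := by
    have key : n 1 * (u 0 * v 1 - u 1 * v 0) = 0 := by linear_combination u 0 * h2 - v 0 * h1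
    rcases mul_eq_zero.mp key with h | h
    · exact h
    · exact absurd h hd0
  have hzero : z - (a • u + b • v) = 0 := by
    rw [show z - (a • u + b • v) = n from by rw [hn]; abel]
    exact ext2 n hn0 hn1
  exact sub_eq_zero.mp hzero

/-- Lagrange: the g-functional of combinations in an orthogonal frame -/
theorem g_combo (u v : V) (huv : ⟪u, v⟫ = 0) (a b a' b' : ℝ) :
    ‖a•u+b•v‖^2 * ‖a'•u+b'•v‖^2 - ⟪a•u+b•v, a'•u+b'•v⟫^2
      = (‖u‖*‖v‖)^2 * (a*b'-a'*b)^2 := by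
  have hz : ∀ (c d : ℝ), ‖c•u+d•v‖^2 = c^2*‖u‖^2 + d^2*‖v‖^2 := by
    intro c d
    rw [norm_add_sq_real, real_inner_smul_left, real_inner_smul_right, huv, norm_smul, norm_smul]
    simp [mul_pow]
  have hi : ⟪a•u+b•v, a'•u+b'•v⟫ = a*a'*‖u‖^2 + b*b'*‖v‖^2 := by
    rw [inner_add_left, inner_add_right, inner_add_right, real_inner_smul_left,
      real_inner_smul_left, real_inner_smul_left, real_inner_smul_left, real_inner_smul_right,
      real_inner_smul_right, real_inner_smul_right, real_inner_smul_right,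
      real_inner_self_eq_norm_sq, real_inner_self_eq_norm_sq, huv, real_inner_comm u v, huv]
    ring
  rw [hz, hz, hi]; ring


def g (A B P : V) : ℝ := ‖B-A‖^2*‖P-A‖^2 - ⟪B-A,P-A⟫^2

theorem g_swap (A B P : V) : g A B P = g A P B := by
  unfold g; rw [real_inner_comm]; ring

theorem g_cyc (A B P : V) : g A B P = g B P A := by
  unfold g
  have e0 : P - B = P - A - (B - A) := by abel
  have e0' : A - B = -(B-A) := by abel
  have e1 : ‖P - A - (B - A)‖^2 = ‖P-A‖^2 - 2*⟪P-A,B-A⟫ + ‖B-A‖^2 := norm_sub_sq_real _ _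
  have e2 : ⟪P - A - (B-A), -(B-A)⟫ = ‖B-A‖^2 - ⟪P-A,B-A⟫ := by
    rw [inner_neg_right, inner_sub_left, real_inner_self_eq_norm_sq]; ring
  rw [e0, e0', norm_neg, e1, e2, real_inner_comm (B-A) (P-A)]
  ring

theorem tri0_s8 (C : Set V) (hC : Convex ℝ C) (A B P : V) (hA : A ∈ C) (hB : B ∈ C) (hP : P ∈ C)
    (h1 : ‖P - A‖ ≤ ‖B - A‖) (h2 : ‖P - B‖ ≤ ‖B - A‖) :
    ∃ x' u' v' : V, ⟪u', v'⟫ = 0 ∧ Q x' u' v' ⊆ C ∧ (4*(‖u'‖*‖v'‖))^2 = g A B P := by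
  by_cases hd : B - A = 0
  · have hPA : P - A = 0 := by
      rw [← norm_le_zero_iff]
      calc ‖P - A‖ ≤ ‖B - A‖ := h1
      _ = 0 := by rw [hd, norm_zero]
    refine ⟨A, 0, 0, by simp, ?_, ?_⟩
    · intro p hp
      rw [mem_Q] at hp
      obtain ⟨s, t, _, _, rfl⟩ := hp
      simpa using hA
    · unfold g; rw [hd, hPA]; simp
  · set d := B - A with hd'
    have hd2 : (0:ℝ) < ‖d‖^2 := by
      have := norm_pos_iff.mpr hd
      positivity
    set κ : ℝ := ⟪P - A, d⟫ / ‖d‖^2 with hκ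
    have hPB : ‖P - B‖^2 = ‖P-A‖^2 - 2*⟪P-A,d⟫ + ‖d‖^2 := by
      have h3 : P - B = (P-A) - d := by rw [hd']; abel
      rw [h3, norm_sub_sq_real]
    have hin1 : 0 ≤ ⟪P - A, d⟫ := by
      nlinarith [sq_nonneg ‖P-A‖, mul_self_le_mul_self (norm_nonneg (P-B)) h2]
    have hin2 : ⟪P - A, d⟫ ≤ ‖d‖^2 := by
      nlinarith [sq_nonneg ‖P-B‖, mul_self_le_mul_self (norm_nonneg (P-A)) h1]
    have hκ0 : 0 ≤ κ := div_nonneg hin1 hd2.le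
    have hκ1 : κ ≤ 1 := by rw [hκ, div_le_one hd2]; exact hin2
    set n : V := (P - A) - κ • d with hn
    have hdn : ⟪d, n⟫ = 0 := by
      rw [hn, inner_sub_right, real_inner_smul_right, real_inner_self_eq_norm_sq, hκ,
        real_inner_comm]
      field_simp; ring
    refine ⟨A + (κ/2) • d, (2⁻¹:ℝ) • d, (2⁻¹:ℝ) • n, ?_, ?_, ?_⟩
    · rw [real_inner_smul_left, real_inner_smul_right, hdn]; ring
    · intro p hp
      rw [mem_Q] at hp
      obtain ⟨s, t, hs, ht, rfl⟩ := hp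
      have key : A + (κ/2) • d + s • (2⁻¹:ℝ) • d + t • (2⁻¹:ℝ) • n
          = (1 - (κ*(1-t)+s)/2 - t/2) • A + ((κ*(1-t)+s)/2) • B + (t/2) • P := by
        rw [hn, hd']; module
      have w1 : 0 ≤ (κ*(1-t)+s)/2 := by
        have : 0 ≤ κ*(1-t) := mul_nonneg hκ0 (by linarith [ht.2])
        linarith [hs.1]
      have w2 : 0 ≤ t/2 := by linarith [ht.1]
      have w0 : 0 ≤ 1 - (κ*(1-t)+s)/2 - t/2 := by
        have hk1 : κ*(1-t) ≤ 1-t := by nlinarith [ht.2]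
        nlinarith [hs.2, ht.2, ht.1, hs.1]
      have hmem := hC.sum_mem (t := (Finset.univ : Finset (Fin 3)))
        (w := ![1 - (κ*(1-t)+s)/2 - t/2, (κ*(1-t)+s)/2, t/2]) (z := ![A, B, P])
        (by intro i _
            fin_cases i <;>
              simp only [Matrix.cons_val_zero, Matrix.cons_val_one, Matrix.head_cons,
                Matrix.cons_val_two, Matrix.tail_cons, Fin.isValue] <;>
              [exact w0; exact w1; exact w2])
        (by simp [Fin.sum_univ_three]; ring)
        (by intro i _
            fin_cases i <;>
              simp only [Matrix.cons_val_zero, Matrix.cons_val_one, Matrix.head_cons,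
                Matrix.cons_val_two, Matrix.tail_cons, Fin.isValue] <;>
              [exact hA; exact hB; exact hP])
      simp only [Fin.sum_univ_three, Matrix.cons_val_zero, Matrix.cons_val_one, Matrix.head_cons,
        Matrix.cons_val_two, Matrix.tail_cons] at hmem
      rw [key]; exact hmem
    · have hnorm : (4*(‖(2⁻¹:ℝ) • d‖*‖(2⁻¹:ℝ) • n‖))^2 = (‖d‖*‖n‖)^2 := by
        rw [norm_smul, norm_smul]
        simp; ring
      rw [hnorm]
      unfold g
      have hPA : ‖P - A‖^2 = κ^2*‖d‖^2 + ‖n‖^2 := by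
        have h3 : P - A = κ • d + n := by rw [hn]; abel
        rw [h3, norm_add_sq_real, real_inner_smul_left, hdn, norm_smul]
        simp [mul_pow]
      have hPAd : ⟪d, P - A⟫ = κ * ‖d‖^2 := by
        have h3 : P - A = κ • d + n := by rw [hn]; abel
        rw [h3, inner_add_right, real_inner_smul_right, real_inner_self_eq_norm_sq, hdn]; ring
      rw [← hd', hPA, hPAd]
      ring


/-- any triangle with vertices in a convex set contains an inscribed rectangle of half its area -/
theorem tri_s8 (C : Set V) (hC : Convex ℝ C) (A B P : V) (hA : A ∈ C) (hB : B ∈ C) (hP : P ∈ C) :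
    ∃ x' u' v' : V, ⟪u', v'⟫ = 0 ∧ Q x' u' v' ⊆ C ∧ (4*(‖u'‖*‖v'‖))^2 = g A B P := by
  rcases le_total ‖P - A‖ ‖B - A‖ with hPA | hPA
  · rcases le_total ‖P - B‖ ‖B - A‖ with hPB | hPB
    · exact tri0_s8 C hC A B P hA hB hP hPA hPB
    · -- base B P, apex A
      obtain ⟨x', u', v', h1, h2, h3⟩ := tri0_s8 C hC B P A hB hP hA
        (by rw [norm_sub_rev A B]; exact hPB) (by rw [norm_sub_rev A P]; exact le_trans hPA hPB)
      exact ⟨x', u', v', h1, h2, by rw [h3, ← g_cyc]⟩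
  · rcases le_total ‖P - B‖ ‖P - A‖ with hPB | hPB
    · -- base A P, apex B
      obtain ⟨x', u', v', h1, h2, h3⟩ := tri0_s8 C hC A P B hA hP hB
        hPA (by rw [norm_sub_rev B P]; exact hPB)
      exact ⟨x', u', v', h1, h2, by rw [h3, ← g_swap]⟩
    · -- base B P, apex A
      obtain ⟨x', u', v', h1, h2, h3⟩ := tri0_s8 C hC B P A hB hP hA
        (by rw [norm_sub_rev A B]; exact le_trans hPA hPB) (by rw [norm_sub_rev A P]; exact hPB)
      exact ⟨x', u', v', h1, h2, by rw [h3, ← g_cyc]⟩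


theorem vol_Q_s8 (x u v : V) (huv : ⟪u, v⟫ = 0) :
    volume (Q x u v) = ENNReal.ofReal (‖u‖ * ‖v‖) := by
  classical
  set b := EuclideanSpace.basisFun (Fin 2) ℝ with hb
  set f : V →ₗ[ℝ] V := b.toBasis.constr ℝ ![u, v] with hf
  have hQ : Q x u v = x +ᵥ (f '' parallelepiped ⇑b.toBasis) := by
    rw [image_parallelepiped]
    ext p
    rw [mem_Q]
    simp only [Set.mem_vadd_set, mem_parallelepiped_iff]
    constructor
    · rintro ⟨s, t, hs, ht, rfl⟩
      refine ⟨s • (f ∘ ⇑b.toBasis) 0 + t • (f ∘ ⇑b.toBasis) 1, ⟨![s, t], ?_, ?_⟩, ?_⟩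
      · constructor <;> intro i <;> fin_cases i <;> simp [hs.1, hs.2, ht.1, ht.2]
      · rw [Fin.sum_univ_two]; simp
      · have h0 : (f ∘ ⇑b.toBasis) 0 = u := by
          show f (b.toBasis 0) = u
          rw [hf, Module.Basis.constr_basis]
          simp
        have h1 : (f ∘ ⇑b.toBasis) 1 = v := by
          show f (b.toBasis 1) = v
          rw [hf, Module.Basis.constr_basis]
          simp
        rw [h0, h1]
        simp [vadd_eq_add]; abel
    · rintro ⟨z, ⟨t, ht, rfl⟩, rfl⟩
      refine ⟨t 0, t 1, ⟨ht.1 0, ht.2 0⟩, ⟨ht.1 1, ht.2 1⟩, ?_⟩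
      rw [Fin.sum_univ_two]
      have h0 : (f ∘ ⇑b.toBasis) 0 = u := by
        show f (b.toBasis 0) = u
        rw [hf, Module.Basis.constr_basis]; simp
      have h1 : (f ∘ ⇑b.toBasis) 1 = v := by
        show f (b.toBasis 1) = v
        rw [hf, Module.Basis.constr_basis]; simp
      rw [h0, h1]
      simp [vadd_eq_add]; abel
  rw [hQ, measure_vadd, Measure.addHaar_image_linearMap]
  have hpar : volume (parallelepiped ⇑b.toBasis) = 1 := by
    rw [OrthonormalBasis.coe_toBasis]
    exact b.volume_parallelepiped
  rw [hpar, mul_one]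
  congr 1
  have hdet : LinearMap.det f = u 0 * v 1 - u 1 * v 0 := by
    rw [← LinearMap.det_toMatrix b.toBasis f, Matrix.det_fin_two]
    have e : ∀ i j, LinearMap.toMatrix b.toBasis b.toBasis f i j = (![u,v] j) i := by
      intro i j
      rw [LinearMap.toMatrix_apply, Module.Basis.constr_basis]
      rfl
    rw [e, e, e, e]
    simp [mul_comm]
  rw [hdet]
  have hL : (u 0 * v 1 - u 1 * v 0)^2 = (‖u‖*‖v‖)^2 := by
    have h1 : ‖u‖^2 = u 0^2 + u 1^2 := by rw [← real_inner_self_eq_norm_sq, inner_coords]; ring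
    have h2 : ‖v‖^2 = v 0^2 + v 1^2 := by rw [← real_inner_self_eq_norm_sq, inner_coords]; ring
    rw [inner_coords] at huv
    rw [mul_pow, h1, h2]; nlinarith [huv]
  have := abs_eq_abs.mpr (Or.inl (rfl : u 0 * v 1 - u 1 * v 0 = _))
  calc |u 0 * v 1 - u 1 * v 0| = ‖u‖ * ‖v‖ := by
        have h3 : |u 0 * v 1 - u 1 * v 0| = |‖u‖ * ‖v‖| := by
          rw [← Real.sqrt_sq_eq_abs, ← Real.sqrt_sq_eq_abs, hL]
        rw [h3, abs_of_nonneg (by positivity)]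


section main
variable (C : Set V) (x u v : V)

/-- nondegeneracy -/
theorem nondeg (hC : IsConvexBody C) (huv : ⟪u, v⟫ = 0) (hRC : Q x u v ⊆ C)
    (hopt : ∀ x' u' v' : V, ⟪u', v'⟫ = 0 → Q x' u' v' ⊆ C →
      volume (Q x' u' v') ≤ volume (Q x u v)) : u ≠ 0 ∧ v ≠ 0 := by
  obtain ⟨z, hz⟩ := hC.2.2
  obtain ⟨r, hr, hball⟩ := Metric.isOpen_iff.mp isOpen_interior z hz
  have hball' : Metric.ball z r ⊆ C := hball.trans interior_subset
  set E0 : V := EuclideanSpace.single 0 1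
  set E1 : V := EuclideanSpace.single 1 1
  have hE0 : ‖E0‖ = 1 := by simp [E0, EuclideanSpace.norm_single]
  have hE1 : ‖E1‖ = 1 := by simp [E1, EuclideanSpace.norm_single]
  have horth : ⟪(r/2) • E0, (r/2) • E1⟫ = 0 := by
    rw [real_inner_smul_left, real_inner_smul_right]
    simp [E0, E1, EuclideanSpace.inner_single_left, EuclideanSpace.single_apply]
  have hsub : Q (z - (r/4) • (E0 + E1)) ((r/2) • E0) ((r/2) • E1) ⊆ C := by
    intro p hp
    rw [mem_Q] at hp
    obtain ⟨s, t, hs, ht, rfl⟩ := hp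
    apply hball'
    rw [Metric.mem_ball, dist_eq_norm]
    have key : z - (r/4) • (E0 + E1) + s • (r/2) • E0 + t • (r/2) • E1 - z
        = (s*(r/2) - r/4) • E0 + (t*(r/2) - r/4) • E1 := by module
    rw [key]
    calc ‖(s*(r/2) - r/4) • E0 + (t*(r/2) - r/4) • E1‖
        ≤ ‖(s*(r/2) - r/4) • E0‖ + ‖(t*(r/2) - r/4) • E1‖ := norm_add_le _ _
      _ = |s*(r/2) - r/4| + |t*(r/2) - r/4| := by rw [norm_smul, norm_smul, hE0, hE1]; simp
      _ ≤ r/4 + r/4 := by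
          gcongr <;> rw [abs_le] <;> constructor <;> nlinarith [hs.1, hs.2, ht.1, ht.2]
      _ < r := by linarith
  have h1 := hopt _ _ _ horth hsub
  rw [vol_Q_s8 _ _ _ horth, vol_Q_s8 _ _ _ huv] at h1
  have h2 : ‖(r/2) • E0‖ * ‖(r/2) • E1‖ ≤ ‖u‖ * ‖v‖ := by
    rw [← ENNReal.ofReal_le_ofReal_iff (by positivity)]
    exact h1
  rw [norm_smul, norm_smul, hE0, hE1] at h2
  simp only [Real.norm_eq_abs, mul_one, abs_of_pos (by linarith : (0:ℝ) < r/2)] at h2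
  have h3 : (0:ℝ) < ‖u‖ * ‖v‖ := by nlinarith
  constructor
  · intro h; rw [h] at h3; simp at h3
  · intro h; rw [h] at h3; simp at h3

set_option maxHeartbeats 1000000 in
/-- the key width bound: no point of C is further than 4·width(R) from the center -/
theorem width_bound (hC : IsConvexBody C) (huv : ⟪u, v⟫ = 0) (hRC : Q x u v ⊆ C)
    (hopt : ∀ x' u' v' : V, ⟪u', v'⟫ = 0 → Q x' u' v' ⊆ C →
      volume (Q x' u' v') ≤ volume (Q x u v))
    (hu : u ≠ 0) (hv : v ≠ 0) (w : V) (p : V) (hp : p ∈ C) :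
    ⟪p, w⟫ - ⟪x + (2⁻¹:ℝ) • (u + v), w⟫ ≤ 4*(|⟪u,w⟫| + |⟪v,w⟫|) := by
  set c : V := x + (2⁻¹:ℝ) • (u + v) with hc
  by_contra hcon
  push_neg at hcon
  set X : ℝ := ⟪p - c, u⟫/‖u‖^2 with hX
  set Y : ℝ := ⟪p - c, v⟫/‖v‖^2 with hY
  have hdec : p - c = X • u + Y • v := span2 u v huv hu hv (p - c)
  set a : ℝ := ⟪u, w⟫ with ha
  set b : ℝ := ⟪v, w⟫ with hb
  have hdelta : ⟪p, w⟫ - ⟪c, w⟫ = X*a + Y*b := by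
    rw [← inner_sub_left, hdec, inner_add_left, real_inner_smul_left, real_inner_smul_left]
  have hbig : 4 < |X| + |Y| := by
    by_contra hle
    push_neg at hle
    have h1 : X*a + Y*b ≤ |X| * |a| + |Y| * |b| := by
      calc X*a + Y*b ≤ |X*a + Y*b| := le_abs_self _
        _ ≤ |X * a| + |Y * b| := abs_add_le _ _
        _ = |X| * |a| + |Y| * |b| := by rw [abs_mul, abs_mul]
    have h2 : |X| ≤ 4 ∨ |Y| ≤ 4 := by
      rcases le_total (|X|) 4 with h | h
      · exact Or.inl h
      · right; linarith [abs_nonneg X]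
    have hX4 : |X| ≤ 4 := by linarith [abs_nonneg Y]
    have hY4 : |Y| ≤ 4 := by linarith [abs_nonneg X]
    have : X*a + Y*b ≤ 4*(|a| + |b|) := by
      nlinarith [abs_nonneg a, abs_nonneg b]
    rw [hdelta] at hcon
    linarith
  -- signs
  set sX : ℝ := if 0 ≤ X then 1 else -1 with hsX
  set sY : ℝ := if 0 ≤ Y then 1 else -1 with hsY
  have hsXX : sX * X = |X| := by
    rw [hsX]; split_ifs with h
    · rw [abs_of_nonneg h]; ring
    · rw [abs_of_neg (not_le.mp h)]; ring
  have hsYY : sY * Y = |Y| := by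
    rw [hsY]; split_ifs with h
    · rw [abs_of_nonneg h]; ring
    · rw [abs_of_neg (not_le.mp h)]; ring
  have hsX1 : sX = 1 ∨ sX = -1 := by rw [hsX]; split_ifs <;> simp
  have hsY1 : sY = 1 ∨ sY = -1 := by rw [hsY]; split_ifs <;> simp
  set P₀ : V := c - (sY/2) • u + (sX/2) • v with hP₀
  set P₁ : V := c + (sY/2) • u - (sX/2) • v with hP₁
  have hP₀C : P₀ ∈ C := by
    apply hRC
    rw [mem_Q]
    refine ⟨(1-sY)/2, (1+sX)/2, ?_, ?_, ?_⟩
    · rcases hsY1 with h | h <;> rw [h] <;> norm_num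
    · rcases hsX1 with h | h <;> rw [h] <;> norm_num
    · rw [hP₀, hc]; module
  have hP₁C : P₁ ∈ C := by
    apply hRC
    rw [mem_Q]
    refine ⟨(1+sY)/2, (1-sX)/2, ?_, ?_, ?_⟩
    · rcases hsY1 with h | h <;> rw [h] <;> norm_num
    · rcases hsX1 with h | h <;> rw [h] <;> norm_num
    · rw [hP₁, hc]; module
  obtain ⟨x', u', v', horth', hsub', harea⟩ := tri_s8 C hC.2.1 P₀ P₁ p hP₀C hP₁C hp
  have hg : g P₀ P₁ p = (‖u‖*‖v‖)^2 * (|X|+|Y|)^2 := by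
    have e1 : P₁ - P₀ = sY • u + (-sX) • v := by rw [hP₀, hP₁]; module
    have e2 : p - P₀ = (X + sY/2) • u + (Y - sX/2) • v := by
      have : p - P₀ = (p - c) + (sY/2) • u - (sX/2) • v := by rw [hP₀]; abel
      rw [this, hdec]; module
    unfold g
    rw [e1, e2, g_combo u v huv]
    have : sY * (Y - sX/2) - (X + sY/2) * (-sX) = |X| + |Y| := by
      have h2 : sX * sX = 1 := by rcases hsX1 with h | h <;> rw [h] <;> norm_num
      nlinarith [hsXX, hsYY]
    rw [this]
  have hAeq : 4*(‖u'‖*‖v'‖) = (‖u‖*‖v‖)*(|X|+|Y|) := by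
    have h1 : (4*(‖u'‖*‖v'‖))^2 = ((‖u‖*‖v‖)*(|X|+|Y|))^2 := by rw [harea, hg]; ring
    have h2 := congrArg Real.sqrt h1
    rwa [Real.sqrt_sq (by positivity), Real.sqrt_sq (by positivity)] at h2
  have hlt : ‖u‖*‖v‖ < ‖u'‖*‖v'‖ := by
    have hpos : (0:ℝ) < ‖u‖*‖v‖ := by
      have := norm_pos_iff.mpr hu
      have := norm_pos_iff.mpr hv
      positivity
    nlinarith
  have := hopt x' u' v' horth' hsub'
  rw [vol_Q_s8 _ _ _ horth', vol_Q_s8 _ _ _ huv] at this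
  have : ‖u'‖*‖v'‖ ≤ ‖u‖*‖v‖ := by
    rw [← ENNReal.ofReal_le_ofReal_iff (by positivity)]
    exact this
  linarith
end main


theorem cont_inner (w : V) : Continuous fun p : V => ⟪p, w⟫ :=
  Continuous.inner continuous_id continuous_const


/-- an ε-kernel contains the rectangle obtained by scaling a
maximum-area inscribed rectangle by `1 - 16ε` about its center, whose area is at
least `(1 - 32ε)` times the optimal area. -/
theorem kernel_contains_large_area_rectangle (C K : Set V) (hC : IsConvexBody C)
    (ε : ℝ) (hε : ε ∈ Set.Ioo (0:ℝ) (1/32)) (hK : IsKernel ε K C)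
    (x u v : V) (huv : ⟪u, v⟫ = 0) (hRC : Q x u v ⊆ C)
    (hopt : ∀ x' u' v' : V, ⟪u', v'⟫ = 0 → Q x' u' v' ⊆ C →
      MeasureTheory.volume (Q x' u' v') ≤ MeasureTheory.volume (Q x u v)) :
    AffineMap.homothety (x + (2⁻¹ : ℝ) • (u + v)) (1 - 16 * ε) '' Q x u v ⊆ K ∧
    ENNReal.ofReal (1 - 32 * ε) * MeasureTheory.volume (Q x u v) ≤
      MeasureTheory.volume
        (AffineMap.homothety (x + (2⁻¹ : ℝ) • (u + v)) (1 - 16 * ε) '' Q x u v) := by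
  
  obtain ⟨hε0, hε32⟩ := hε
  obtain ⟨hu, hv⟩ := nondeg C x u v hC huv hRC hopt
  have hCne : C.Nonempty := ⟨_, interior_subset hC.2.2.choose_spec⟩
  -- K is nonempty
  have hKne : K.Nonempty := by
    by_contra hKe
    rw [Set.not_nonempty_iff_eq_empty] at hKe
    obtain ⟨z, hz⟩ := hC.2.2
    obtain ⟨r, hr, hball⟩ := Metric.isOpen_iff.mp isOpen_interior z hz
    have hball' : Metric.ball z r ⊆ C := hball.trans interior_subset
    set E0 : V := EuclideanSpace.single 0 1 with hE0def
    have hE0 : ‖E0‖ = 1 := by simp [hE0def, EuclideanSpace.norm_single]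
    have hWK : width E0 K = 0 := by
      rw [width, hKe]
      simp [Real.sSup_empty, Real.sInf_empty]
    have h1 : z + (r/2) • E0 ∈ C := by
      apply hball'
      rw [Metric.mem_ball, dist_eq_norm]
      have : z + (r/2) • E0 - z = (r/2) • E0 := by abel
      rw [this, norm_smul, hE0]
      rw [Real.norm_eq_abs, abs_of_pos (by linarith)]
      linarith
    have h2 : z - (r/2) • E0 ∈ C := by
      apply hball'
      rw [Metric.mem_ball, dist_eq_norm]
      have : z - (r/2) • E0 - z = -((r/2) • E0) := by abel
      rw [this, norm_neg, norm_smul, hE0, Real.norm_eq_abs, abs_of_pos (by linarith)]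
      linarith
    have hbdd := (hC.1.image (cont_inner E0)).bddAbove
    have hbdd' := (hC.1.image (cont_inner E0)).bddBelow
    have hi1 : ⟪z + (r/2) • E0, E0⟫ = ⟪z, E0⟫ + r/2 := by
      rw [inner_add_left, real_inner_smul_left, real_inner_self_eq_norm_sq, hE0]; ring
    have hi2 : ⟪z - (r/2) • E0, E0⟫ = ⟪z, E0⟫ - r/2 := by
      rw [inner_sub_left, real_inner_smul_left, real_inner_self_eq_norm_sq, hE0]; ring
    have hs1 : ⟪z, E0⟫ + r/2 ≤ sSup ((fun p => ⟪p, E0⟫) '' C) := by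
      rw [← hi1]; exact le_csSup hbdd ⟨_, h1, rfl⟩
    have hs2 : sInf ((fun p => ⟪p, E0⟫) '' C) ≤ ⟪z, E0⟫ - r/2 := by
      rw [← hi2]; exact csInf_le hbdd' ⟨_, h2, rfl⟩
    have hker := hK.2.2.2 E0 hE0
    rw [hWK, width] at hker
    nlinarith
  refine ⟨?_, ?_⟩
  · rintro q ⟨z, hzQ, rfl⟩
    set c : V := x + (2⁻¹:ℝ) • (u + v) with hc
    by_contra hqK
    have hKcl : IsClosed K := hK.2.1.isClosed
    obtain ⟨f, s₀, hfK, hfq⟩ := geometric_hahn_banach_closed_point hK.2.2.1 hKcl hqK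
    set w₀ : V := (InnerProductSpace.toDual ℝ V).symm f with hw₀
    have hfw : ∀ y : V, f y = ⟪y, w₀⟫ := fun y => by
      rw [real_inner_comm, hw₀, InnerProductSpace.toDual_symm_apply]
    obtain ⟨k₀, hk₀⟩ := id hKne
    have hw0 : w₀ ≠ 0 := by
      intro h
      have h1 := hfK k₀ hk₀
      have h2 := hfq
      rw [hfw, h, inner_zero_right] at h1
      rw [hfw, h, inner_zero_right] at h2
      linarith
    set w : V := ‖w₀‖⁻¹ • w₀ with hw
    have hwn : ‖w‖ = 1 := norm_smul_inv_norm hw0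
    have hinvpos : (0:ℝ) < ‖w₀‖⁻¹ := by
      have := norm_pos_iff.mpr hw0
      positivity
    have hiw : ∀ y : V, ⟪y, w⟫ = ‖w₀‖⁻¹ * f y := fun y => by
      rw [hw, real_inner_smul_right, hfw]
    -- abbreviations
    set a : ℝ := ⟪u, w⟫ with ha
    set b : ℝ := ⟪v, w⟫ with hb
    set h2 : ℝ := (|a| + |b|)/2 with hh2
    set MC : ℝ := sSup ((fun p => ⟪p, w⟫) '' C) with hMC
    set mC : ℝ := sInf ((fun p => ⟪p, w⟫) '' C) with hmC
    set MK : ℝ := sSup ((fun p => ⟪p, w⟫) '' K) with hMK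
    set mK : ℝ := sInf ((fun p => ⟪p, w⟫) '' K) with hmK
    have hbddC := (hC.1.image (cont_inner w)).bddAbove
    have hbddC' := (hC.1.image (cont_inner w)).bddBelow
    have hbddK := (hK.2.1.image (cont_inner w)).bddAbove
    have hbddK' := (hK.2.1.image (cont_inner w)).bddBelow
    -- MK < ⟪q, w⟫
    have hMKlt : MK < ⟪AffineMap.homothety c (1 - 16*ε) z, w⟫ := by
      have hle : MK ≤ ‖w₀‖⁻¹ * s₀ := by
        apply csSup_le (hKne.image _)
        rintro _ ⟨k, hk, rfl⟩
        show ⟪k, w⟫ ≤ ‖w₀‖⁻¹ * s₀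
        rw [hiw k]
        exact (mul_le_mul_of_nonneg_left (hfK k hk).le hinvpos.le)
      have hgt : ‖w₀‖⁻¹ * s₀ < ⟪AffineMap.homothety c (1 - 16*ε) z, w⟫ := by
        rw [hiw]
        exact mul_lt_mul_of_pos_left hfq hinvpos
      linarith
    -- kernel width inequality
    have hker := hK.2.2.2 w hwn
    rw [width, width, ← hMC, ← hmC, ← hMK, ← hmK] at hker
    -- mC ≤ mK
    have hmCK : mC ≤ mK := csInf_le_csInf hbddC' (hKne.image _) (Set.image_mono hK.1)
    -- MC bounds
    have hwb := width_bound C x u v hC huv hRC hopt hu hv w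
    have hMCub : MC ≤ ⟪c, w⟫ + 8 * h2 := by
      apply csSup_le (hCne.image _)
      rintro _ ⟨p, hp, rfl⟩
      have := hwb p hp
      rw [← hc, ← ha, ← hb] at this
      rw [hh2]; linarith
    have hmClb : ⟪c, w⟫ - 8 * h2 ≤ mC := by
      apply le_csInf (hCne.image _)
      rintro _ ⟨p, hp, rfl⟩
      have := width_bound C x u v hC huv hRC hopt hu hv (-w) p hp
      rw [inner_neg_right, inner_neg_right, inner_neg_right, inner_neg_right, ← hc] at this
      rw [abs_neg, abs_neg, ← ha, ← hb] at this
      rw [hh2]; linarith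
    -- MC lower bound via corner
    have hMClb : ⟪c, w⟫ + h2 ≤ MC := by
      set sa : ℝ := if 0 ≤ a then 1 else -1 with hsa
      set sb : ℝ := if 0 ≤ b then 1 else -1 with hsb
      have hsaa : sa * a = |a| := by
        rw [hsa]; split_ifs with h
        · rw [abs_of_nonneg h]; ring
        · rw [abs_of_neg (not_le.mp h)]; ring
      have hsbb : sb * b = |b| := by
        rw [hsb]; split_ifs with h
        · rw [abs_of_nonneg h]; ring
        · rw [abs_of_neg (not_le.mp h)]; ring
      have hsa1 : sa = 1 ∨ sa = -1 := by rw [hsa]; split_ifs <;> simp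
      have hsb1 : sb = 1 ∨ sb = -1 := by rw [hsb]; split_ifs <;> simp
      have hcorner : x + ((1+sa)/2) • u + ((1+sb)/2) • v ∈ C := by
        apply hRC
        rw [mem_Q]
        refine ⟨(1+sa)/2, (1+sb)/2, ?_, ?_, rfl⟩
        · rcases hsa1 with h | h <;> rw [h] <;> norm_num
        · rcases hsb1 with h | h <;> rw [h] <;> norm_num
      have hival : ⟪x + ((1+sa)/2) • u + ((1+sb)/2) • v, w⟫ = ⟪c, w⟫ + h2 := by
        have hxc : x + ((1+sa)/2) • u + ((1+sb)/2) • v = c + (sa/2) • u + (sb/2) • v := by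
          rw [hc]; module
        rw [hxc, inner_add_left, inner_add_left, real_inner_smul_left, real_inner_smul_left,
          ← ha, ← hb, hh2, ← hsaa, ← hsbb]
        ring
      rw [← hival]
      exact le_csSup hbddC ⟨_, hcorner, rfl⟩
    -- value at q
    have hqval : ⟪AffineMap.homothety c (1 - 16*ε) z, w⟫ ≤ ⟪c, w⟫ + (1 - 16*ε) * h2 := by
      rw [mem_Q] at hzQ
      obtain ⟨s, t, hs, ht, rfl⟩ := hzQ
      have hqform : AffineMap.homothety c (1 - 16*ε) (x + s • u + t • v)
          = c + ((1 - 16*ε)*(s - 1/2)) • u + ((1 - 16*ε)*(t - 1/2)) • v := by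
        rw [AffineMap.homothety_apply, vsub_eq_sub, vadd_eq_add, hc]
        module
      rw [hqform, inner_add_left, inner_add_left, real_inner_smul_left, real_inner_smul_left,
        ← ha, ← hb]
      have h16 : (0:ℝ) ≤ 1 - 16*ε := by linarith
      have hb1 : (s - 1/2)*a ≤ |a|/2 := by
        calc (s - 1/2)*a ≤ |(s-1/2)*a| := le_abs_self _
          _ = |s-1/2| * |a| := abs_mul _ _
          _ ≤ (1/2)*|a| := by
              have habs : |s - 1/2| ≤ 1/2 := by
                rw [abs_le]; constructor <;> [linarith [hs.1]; linarith [hs.2]]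
              exact mul_le_mul_of_nonneg_right habs (abs_nonneg a)
          _ = |a|/2 := by ring
      have hb2 : (t - 1/2)*b ≤ |b|/2 := by
        calc (t - 1/2)*b ≤ |(t-1/2)*b| := le_abs_self _
          _ = |t-1/2| * |b| := abs_mul _ _
          _ ≤ (1/2)*|b| := by
              have habs : |t - 1/2| ≤ 1/2 := by
                rw [abs_le]; constructor <;> [linarith [ht.1]; linarith [ht.2]]
              exact mul_le_mul_of_nonneg_right habs (abs_nonneg b)
          _ = |b|/2 := by ring
      have : (1 - 16*ε)*(s - 1/2)*a + (1 - 16*ε)*(t - 1/2)*b ≤ (1 - 16*ε) * h2 := by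
        rw [hh2]
        have e1 : (1 - 16*ε)*(s - 1/2)*a = (1-16*ε)*((s-1/2)*a) := by ring
        have e2 : (1 - 16*ε)*(t - 1/2)*b = (1-16*ε)*((t-1/2)*b) := by ring
        rw [e1, e2]
        have g1 := mul_le_mul_of_nonneg_left hb1 h16
        have g2 := mul_le_mul_of_nonneg_left hb2 h16
        calc (1-16*ε)*((s-1/2)*a) + (1-16*ε)*((t-1/2)*b)
            ≤ (1-16*ε)*(|a|/2) + (1-16*ε)*(|b|/2) := by linarith
          _ = (1-16*ε)*((|a|+|b|)/2) := by ring
      linarith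
    -- final contradiction
    have h2nn : 0 ≤ h2 := by rw [hh2]; positivity
    have hεw : ε * (MC - mC) ≤ 16 * (ε * h2) := by
      have := mul_le_mul_of_nonneg_left (show MC - mC ≤ 16 * h2 by linarith) hε0.le
      linarith
    have hexp : (1-ε)*(MC-mC) = (MC-mC) - ε*(MC-mC) := by ring
    have hexp2 : (1-16*ε)*h2 = h2 - 16*(ε*h2) := by ring
    linarith [hker, hmCK, hMClb, hqval, hMKlt, hexp, hexp2, hεw]
  · have hvol1 : volume (Q x u v) = ENNReal.ofReal (‖u‖*‖v‖) := vol_Q_s8 x u v huv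
    rw [Measure.addHaar_image_homothety, hvol1]
    have hrank : Module.finrank ℝ V = 2 := finrank_euclideanSpace_fin
    rw [hrank]
    have key : ENNReal.ofReal (1 - 32*ε) ≤ ENNReal.ofReal (|(1 - 16*ε)^2|) := by
      apply ENNReal.ofReal_le_ofReal
      rw [abs_of_nonneg (by positivity)]
      nlinarith
    exact mul_le_mul_left key _
end
end

section
/- Let C be a convex body in the plane containing the rectangle R_opt = [−a,a] × [−b,b] with 0 < (ε/2)a < b ≤ a, such that R_opt has maximum perimeter among rectangles inscribed in C, and let K be an (ε/16)-kernel of C, where ε ∈ (0,1). Then K contains a rectangle of perimeter at least (1−ε)·peri(R_opt); specifically, with t = aε/4, the rectangle S = [−a+t, a−t] × [−b+t, b−t] is contained in K and peri(S) = peri(R_opt) − 8t > (1−ε)·peri(R_opt). -/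
open scoped RealInnerProductSpace
noncomputable section

lemma abs_coord_le (u : V) (i : Fin 2) : |u i| ≤ ‖u‖ := by
  have h := abs_real_inner_le_norm u (EuclideanSpace.single i (1:ℝ))
  simpa [EuclideanSpace.inner_single_right] using h

/-- fat optimal rectangle case: the `(ε/16)`-kernel contains a
shrunk rectangle of perimeter greater than `(1-ε)` times the optimal perimeter. -/
theorem kernel_contains_large_perimeter_rectangle (C K : Set V)
    (hC : IsConvexBody C) (a b ε : ℝ)
    (hfat : 0 < (ε / 2) * a) (hb : (ε / 2) * a < b) (hba : b ≤ a)
    (hε : ε ∈ Set.Ioo (0:ℝ) 1)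
    (hRC : rect a b ⊆ C)
    (hopt : ∀ x u v : V, ⟪u, v⟫ = 0 → Q x u v ⊆ C →
      2 * ‖u‖ + 2 * ‖v‖ ≤ 4 * a + 4 * b)
    (hK : IsKernel (ε / 16) K C) :
    rect (a - a * ε / 4) (b - a * ε / 4) ⊆ K ∧
    4 * (a - a * ε / 4) + 4 * (b - a * ε / 4) = (4 * a + 4 * b) - 8 * (a * ε / 4) ∧
    (4 * a + 4 * b) - 8 * (a * ε / 4) > (1 - ε) * (4 * a + 4 * b) := by
  obtain ⟨hεpos, hε1⟩ := hε
  have ha : 0 < a := by nlinarith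
  have hb0 : 0 < b := lt_trans hfat hb
  obtain ⟨hKC, hKcomp, hKconv, hker⟩ := hK
  obtain ⟨hCcomp, hCconv, -⟩ := hC
  set t : ℝ := a * ε / 4 with ht
  have htpos : 0 < t := by rw [ht]; positivity
  have htb : t < b := by rw [ht]; nlinarith
  refine ⟨?_, by ring, by nlinarith⟩
  -- continuity of inner functionals
  have hgc : ∀ u : V, Continuous fun x : V => ⟪x, u⟫ := fun u =>
    Continuous.inner continuous_id continuous_const
  have hCne : C.Nonempty := ⟨0, hRC ⟨by simpa using ha.le, by simpa using hb0.le⟩⟩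
  -- diameter-type bound: width of C in any unit direction ≤ 4a
  have hwC_le : ∀ u : V, ‖u‖ = 1 → width u C ≤ 4 * a := by
    intro u hu
    obtain ⟨q, hqC, hq⟩ := hCcomp.exists_isMaxOn hCne (hgc u).continuousOn
    obtain ⟨r, hrC, hr⟩ := hCcomp.exists_isMinOn hCne (hgc u).continuousOn
    have hQ : Q r (q - r) 0 ⊆ C := by
      apply convexHull_min _ hCconv
      intro x hx
      have h1 : r + (q - r) = q := by abel
      simp only [Q, add_zero, h1, Set.mem_insert_iff, Set.mem_singleton_iff] at hx
      rcases hx with rfl | rfl | rfl | rfl <;> assumption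
    have hnorm : 2 * ‖q - r‖ + 2 * ‖(0:V)‖ ≤ 4 * a + 4 * b :=
      hopt r (q - r) 0 (inner_zero_right _) hQ
    have hd : ‖q - r‖ ≤ 2 * a + 2 * b := by
      rw [norm_zero] at hnorm; linarith
    have hsup : sSup ((fun p => ⟪p, u⟫) '' C) ≤ ⟪q, u⟫ :=
      csSup_le (hCne.image _) (by rintro y ⟨x, hx, rfl⟩; exact hq hx)
    have hinf : ⟪r, u⟫ ≤ sInf ((fun p => ⟪p, u⟫) '' C) :=
      le_csInf (hCne.image _) (by rintro y ⟨x, hx, rfl⟩; exact hr hx)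
    have hin : ⟪q, u⟫ - ⟪r, u⟫ ≤ ‖q - r‖ := by
      have h2 := real_inner_le_norm (q - r) u
      rw [inner_sub_left] at h2
      rw [hu] at h2
      simpa using h2
    have : width u C ≤ ⟪q, u⟫ - ⟪r, u⟫ := by
      unfold width; linarith
    nlinarith
  -- width of C is at least 2b in any unit direction (via ±b•u ∈ rect a b)
  have hwC_lb : ∀ u : V, ‖u‖ = 1 → 2 * b ≤ width u C := by
    intro u hu
    have hm : ∀ s : ℝ, |s| ≤ b → s • u ∈ rect a b := by
      intro s hs
      have h0 := abs_coord_le u 0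
      have h1 := abs_coord_le u 1
      rw [hu] at h0 h1
      constructor
      · have : |(s • u) 0| = |s| * |u 0| := by
          simp [abs_mul]
        rw [this]
        calc |s| * |u 0| ≤ b * 1 := by
              apply mul_le_mul hs h0 (abs_nonneg _) hb0.le
          _ ≤ a := by linarith
      · have : |(s • u) 1| = |s| * |u 1| := by
          simp [abs_mul]
        rw [this]
        calc |s| * |u 1| ≤ b * 1 := by
              apply mul_le_mul hs h1 (abs_nonneg _) hb0.le
          _ = b := by ring
    have huu : ⟪u, u⟫ = (1:ℝ) := by
      rw [real_inner_self_eq_norm_mul_norm, hu]; ring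
    have hsup : b ≤ sSup ((fun p => ⟪p, u⟫) '' C) := by
      have hmemb : ⟪b • u, u⟫ ∈ (fun p => ⟪p, u⟫) '' C :=
        ⟨b • u, hRC (hm b (by rw [abs_of_pos hb0])), rfl⟩
      have h2 := le_csSup (hCcomp.image (hgc u)).bddAbove hmemb
      rwa [real_inner_smul_left, huu, mul_one] at h2
    have hinf : sInf ((fun p => ⟪p, u⟫) '' C) ≤ -b := by
      have hmemb : ⟪(-b) • u, u⟫ ∈ (fun p => ⟪p, u⟫) '' C :=
        ⟨(-b) • u, hRC (hm (-b) (by rw [abs_neg, abs_of_pos hb0])), rfl⟩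
      have h2 := csInf_le (hCcomp.image (hgc u)).bddBelow hmemb
      rwa [real_inner_smul_left, huu, mul_one] at h2
    unfold width; linarith
  -- K is nonempty
  have hKne : K.Nonempty := by
    by_contra h
    rw [Set.not_nonempty_iff_eq_empty] at h
    set u0 : V := EuclideanSpace.single 0 (1:ℝ) with hu0def
    have hu0 : ‖u0‖ = 1 := by simp [hu0def, EuclideanSpace.norm_single]
    have hk := hker u0 hu0
    have hwK : width u0 K = 0 := by
      rw [h]; unfold width; simp
    have := hwC_lb u0 hu0
    rw [hwK] at hk
    nlinarith
  -- main containment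
  intro p hp
  by_contra hpK
  obtain ⟨f, c, hfK, hfp⟩ := geometric_hahn_banach_closed_point hKconv hKcomp.isClosed hpK
  set v : V := (InnerProductSpace.toDual ℝ V).symm f with hvdef
  have hvx : ∀ x : V, ⟪x, v⟫ = f x := fun x => by
    rw [real_inner_comm]; exact InnerProductSpace.toDual_symm_apply
  obtain ⟨k, hkK⟩ := id hKne
  have hvne : v ≠ 0 := by
    intro h0
    have h1 : f k < f p := lt_trans (hfK k hkK) hfp
    rw [← hvx k, ← hvx p, h0] at h1
    simp at h1
  set u : V := ‖v‖⁻¹ • v with hudef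
  have hu : ‖u‖ = 1 := norm_smul_inv_norm hvne
  have hvpos : (0:ℝ) < ‖v‖⁻¹ := inv_pos.mpr (norm_pos_iff.mpr hvne)
  set c' : ℝ := ‖v‖⁻¹ * c with hc'def
  have hux : ∀ x : V, ⟪x, u⟫ = ‖v‖⁻¹ * f x := by
    intro x
    rw [hudef, real_inner_smul_right, hvx]
  have hKlt : ∀ x ∈ K, ⟪x, u⟫ ≤ c' := by
    intro x hx
    rw [hux, hc'def]
    exact (mul_le_mul_of_nonneg_left (hfK x hx).le hvpos.le)
  have hplt : c' < ⟪p, u⟫ := by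
    rw [hux, hc'def]
    exact mul_lt_mul_of_pos_left hfp hvpos
  -- p + t • u ∈ rect a b ⊆ C
  have hmem : p + t • u ∈ rect a b := by
    have h0 := abs_coord_le u 0
    have h1 := abs_coord_le u 1
    rw [hu] at h0 h1
    obtain ⟨hp0, hp1⟩ := hp
    constructor
    · have : (p + t • u) 0 = p 0 + t * u 0 := by simp
      rw [this]
      calc |p 0 + t * u 0| ≤ |p 0| + |t * u 0| := abs_add_le _ _
        _ ≤ (a - t) + t * 1 := by
            rw [abs_mul, abs_of_pos htpos]
            exact add_le_add hp0 (mul_le_mul_of_nonneg_left h0 htpos.le)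
        _ = a := by ring
    · have : (p + t • u) 1 = p 1 + t * u 1 := by simp
      rw [this]
      calc |p 1 + t * u 1| ≤ |p 1| + |t * u 1| := abs_add_le _ _
        _ ≤ (b - t) + t * 1 := by
            rw [abs_mul, abs_of_pos htpos]
            exact add_le_add hp1 (mul_le_mul_of_nonneg_left h1 htpos.le)
        _ = b := by ring
  have huu : ⟪u, u⟫ = (1:ℝ) := by
    rw [real_inner_self_eq_norm_mul_norm, hu]; ring
  have hsupC : ⟪p, u⟫ + t ≤ sSup ((fun x => ⟪x, u⟫) '' C) := by
    have hmemb : ⟪p + t • u, u⟫ ∈ (fun x => ⟪x, u⟫) '' C :=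
      ⟨p + t • u, hRC hmem, rfl⟩
    have h2 := le_csSup (hCcomp.image (hgc u)).bddAbove hmemb
    rwa [inner_add_left, real_inner_smul_left, huu, mul_one] at h2
  have hsupK : sSup ((fun x => ⟪x, u⟫) '' K) ≤ c' :=
    csSup_le (hKne.image _) (by rintro y ⟨x, hx, rfl⟩; exact hKlt x hx)
  have hinfK : sInf ((fun x => ⟪x, u⟫) '' C) ≤ sInf ((fun x => ⟪x, u⟫) '' K) :=
    csInf_le_csInf (hCcomp.image (hgc u)).bddBelow (hKne.image _)
      (Set.image_mono hKC)
  have hkerin := hker u hu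
  have hwle := hwC_le u hu
  have hwlt : width u K < width u C - t := by
    unfold width; linarith
  unfold width at hkerin hwlt hwle
  have h4 := mul_le_mul_of_nonneg_left hwle (by positivity : (0:ℝ) ≤ ε/16)
  linarith
end
end
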